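/- For any g ∈ SL₂(ℤ), the following identity holds in M̃_Γ: {g,gS} + {gU,gUS} + {gU²,gU²S} = {g,gT} + {gU,gUT} + {gU²,gU²T}, where S = [[0,-1],[1,0]], U = [[1,-1],[1,0]], T = [[1,1],[0,1]]. -/

import Mathlib

namespace Stmt5

abbrev SL2 : Type := Matrix.SpecialLinearGroup (Fin 2) ℤ

def T : SL2 := ⟨!![1, 1; 0, 1], by norm_num [Matrix.det_fin_two_of]⟩
def S : SL2 := ⟨!![0, -1; 1, 0], by norm_num [Matrix.det_fin_two_of]⟩
def U : SL2 := ⟨!![1, -1; 1, 0], by norm_num [Matrix.det_fin_two_of]⟩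
def negOne : SL2 := ⟨!![-1, 0; 0, -1], by norm_num [Matrix.det_fin_two_of]⟩

lemma hUS : U * S = negOne * T := by
  ext i j
  simp only [Matrix.SpecialLinearGroup.coe_mul]
  fin_cases i <;> fin_cases j <;>
    simp [U, S, T, negOne, Matrix.mul_apply, Fin.sum_univ_succ]

lemma hUUS : U * U * S = negOne * (U * T) := by
  ext i j
  simp only [Matrix.SpecialLinearGroup.coe_mul]
  fin_cases i <;> fin_cases j <;>
    simp [U, S, T, negOne, Matrix.mul_apply, Fin.sum_univ_succ]

lemma hUUT : U * U * T = S := by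
  ext i j
  simp only [Matrix.SpecialLinearGroup.coe_mul]
  fin_cases i <;> fin_cases j <;>
    simp [U, S, T, negOne, Matrix.mul_apply, Fin.sum_univ_succ]

lemma negOne_comm (g : SL2) : g * negOne = negOne * g := by
  ext i j
  simp only [Matrix.SpecialLinearGroup.coe_mul]
  fin_cases i <;> fin_cases j <;>
    simp [negOne, Matrix.mul_apply, Fin.sum_univ_succ, mul_comm]

/-- For any `g ∈ SL₂(ℤ)`, in `M̃_Γ` (here formulated universally for any
assignment `f : SL₂(ℤ)² → M` satisfying the defining relations of the mixed modular
symbols of level a finite index subgroup `Γ`):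
`{g,gS} + {gU,gUS} + {gU²,gU²S} = {g,gT} + {gU,gUT} + {gU²,gU²T}`. -/
theorem stmt_5 {M : Type*} [AddCommGroup M] (Γ : Subgroup SL2) (hΓ : Γ.FiniteIndex)
    (f : SL2 → SL2 → M)
    (hChasles : ∀ g g' g'' : SL2, f g g' + f g' g'' + f g'' g = 0)
    (hSignL : ∀ g g' : SL2, f (negOne * g) g' = f g g')
    (hSignR : ∀ g g' : SL2, f g (negOne * g') = f g g')
    (hT : ∀ (g : SL2) (n : ℤ), f g (g * T ^ n) = n • f g (g * T))
    (hΓinv : ∀ γ ∈ Γ, ∀ g g' : SL2, f (γ * g) (γ * g') = f g g')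
    (g : SL2) :
    f g (g * S) + f (g * U) (g * U * S) + f (g * U * U) (g * U * U * S)
      = f g (g * T) + f (g * U) (g * U * T) + f (g * U * U) (g * U * U * T) := by
  have h0 : ∀ a : SL2, f a a = 0 := by
    intro a
    have := hT a 0
    simpa using this
  have anti : ∀ a b : SL2, f b a = -f a b := by
    intro a b
    have h := hChasles a b b
    rw [h0, add_zero] at h
    exact eq_neg_of_add_eq_zero_right h
  have htrans : ∀ a b c : SL2, f a c = f a b + f b c := by
    intro a b c
    have h := hChasles a b c
    rw [anti a c] at h
    rw [← sub_eq_add_neg] at h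
    exact (sub_eq_zero.mp h).symm
  have nmul : ∀ a b : SL2, a * (negOne * b) = negOne * (a * b) := by
    intro a b
    rw [← mul_assoc, negOne_comm, mul_assoc]
  have e1 : g * U * S = negOne * (g * T) := by
    rw [mul_assoc, hUS, nmul]
  have e2 : g * U * U * S = negOne * (g * U * T) := by
    rw [mul_assoc g U U, mul_assoc g (U * U) S, hUUS, nmul, ← mul_assoc g U T]
  have e3 : g * U * U * T = g * S := by
    rw [mul_assoc g U U, mul_assoc g (U * U) T, hUUT]
  rw [e1, e2, e3, hSignR, hSignR]
  rw [htrans g (g * U) (g * S), htrans (g * U) (g * U * U) (g * S),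
    htrans (g * U) g (g * T), htrans (g * U * U) (g * U) (g * U * T),
    anti g (g * U), anti (g * U) (g * U * U)]
  abel

end Stmt5
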